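/- arXiv:1801.01313 — 3 statements merged into one kernel-verified Lean document; each statement's English description precedes it below -/
import Mathlib

section
/- For a nonnegative integer κ and y ∈ [−1,1], ∫_{−1}^{y} (1−z²)^κ dz = (1+y)^{κ+1} · ∑_{ν=0}^{κ} 2^ν C(κ,ν) · ν!(2κ−ν)!/(2κ+1)! · (1−y)^{κ−ν}. -/
open Finset
def dcoef (κ ν : ℕ) : ℕ := 2^ν * κ.choose ν * ν.factorial * (2*κ - ν).factorial

lemma dcoef_rec (κ ν : ℕ) : 2 * (κ - ν) * dcoef κ ν = (2*κ - ν) * dcoef κ (ν+1) := by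
  rcases lt_or_ge ν κ with h | h
  · have h1 : (2*κ - ν).factorial = (2*κ - ν) * (2*κ - (ν+1)).factorial := by
      have e : 2*κ - ν = (2*κ - (ν+1)) + 1 := by omega
      rw [e, Nat.factorial_succ]
    have h2 : κ.choose (ν+1) * (ν+1) = κ.choose ν * (κ - ν) := Nat.choose_succ_right_eq κ ν
    unfold dcoef
    rw [h1, Nat.factorial_succ, pow_succ]
    zify [Nat.le_of_lt h, show ν ≤ 2*κ by omega, show ν+1 ≤ 2*κ by omega]
    zify [Nat.le_of_lt h] at h2
    linear_combination (2^ν * ν.factorial * ((2*κ:ℤ) - ν) * (2*κ - (ν+1)).factorial * 2) * h2.symm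
  · have h0 : κ.choose (ν+1) = 0 := Nat.choose_eq_zero_of_lt (by omega)
    have h1 : κ - ν = 0 := by omega
    simp [dcoef, h0, h1]

lemma sum_identity (κ : ℕ) (z : ℝ) :
    (↑(κ+1) : ℝ) * (1+z)^κ * ∑ ν ∈ range (κ+1), (dcoef κ ν : ℝ) * (1-z)^(κ-ν)
      + (1+z)^(κ+1) * ∑ ν ∈ range (κ+1),
          (dcoef κ ν : ℝ) * ((↑(κ-ν) : ℝ) * (1-z)^(κ-ν-1) * (-1))
    = ((2*κ+1).factorial : ℝ) * (1-z^2)^κ := by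
  set g : ℕ → ℝ := fun ν => ((2*κ+1-ν : ℕ) : ℝ) * (dcoef κ ν : ℝ) * (1+z)^κ * (1-z)^(κ-ν)
    with hg
  have step : ∀ ν ∈ range (κ+1),
      (↑(κ+1) : ℝ) * (1+z)^κ * ((dcoef κ ν : ℝ) * (1-z)^(κ-ν))
        + (1+z)^(κ+1) * ((dcoef κ ν : ℝ) * ((↑(κ-ν) : ℝ) * (1-z)^(κ-ν-1) * (-1)))
      = g ν - g (ν+1) := by
    intro ν hν
    rw [Finset.mem_range] at hν
    rcases eq_or_lt_of_le (Nat.lt_succ_iff.mp hν) with he | hlt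
    · subst he
      have h0 : dcoef ν (ν+1) = 0 := by
        simp [dcoef, Nat.choose_eq_zero_of_lt (Nat.lt_succ_self ν)]
      have e3 : 2*ν+1-ν = ν+1 := by omega
      simp only [hg, h0, Nat.sub_self, e3]
      push_cast
      ring
    · set m := κ - ν - 1 with hm
      have e1 : κ - ν = m + 1 := by omega
      have e2 : κ - ν - 1 = m := by omega
      have e3 : 2*κ+1-ν = κ+m+2 := by omega
      have e4 : 2*κ+1-(ν+1) = κ+m+1 := by omega
      have e5 : κ - (ν+1) = m := by omega
      have hA : 2 * ((m:ℝ)+1) * (dcoef κ ν : ℝ) = ((κ+m+1 : ℕ) : ℝ) * (dcoef κ (ν+1) : ℝ) := by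
        have := dcoef_rec κ ν
        rw [e1] at this
        have e6 : 2*κ - ν = κ+m+1 := by omega
        rw [e6] at this
        exact_mod_cast congrArg (Nat.cast : ℕ → ℝ) this
      push_cast at hA
      rw [hg]
      simp only [e1, e2, e3, e4, e5]
      push_cast
      linear_combination (-((1+z)^κ * (1-z)^m)) * hA
  rw [Finset.mul_sum, Finset.mul_sum, ← Finset.sum_add_distrib,
    Finset.sum_congr rfl step, Finset.sum_range_sub']
  have hgk : g (κ+1) = 0 := by
    have h0 : dcoef κ (κ+1) = 0 := by
      simp [dcoef, Nat.choose_eq_zero_of_lt (Nat.lt_succ_self κ)]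
    simp [hg, h0]
  have hfac : ((2*κ+1).factorial : ℝ) = ((2*κ+1 : ℕ) : ℝ) * ((2*κ).factorial : ℝ) := by
    exact_mod_cast congrArg (Nat.cast : ℕ → ℝ) (Nat.factorial_succ (2*κ))
  rw [hgk, hg]
  simp only [Nat.sub_zero]
  have : (1 - z^2)^κ = (1+z)^κ * (1-z)^κ := by
    rw [← mul_pow]; ring_nf
  rw [this, hfac]
  simp [dcoef]
  ring

theorem G_lambda_factored (κ : ℕ) (y : ℝ) (hy : y ∈ Set.Icc (-1 : ℝ) 1) :
    ∫ z in (-1 : ℝ)..y, (1 - z ^ 2) ^ κ =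
      (1 + y) ^ (κ + 1) *
        ∑ ν ∈ Finset.range (κ + 1),
          2 ^ ν * (κ.choose ν : ℝ) * (ν.factorial : ℝ) * ((2 * κ - ν).factorial : ℝ) /
            ((2 * κ + 1).factorial : ℝ) * (1 - y) ^ (κ - ν) := by
  have hN : ((2*κ+1).factorial : ℝ) ≠ 0 := by
    exact_mod_cast (Nat.factorial_pos (2*κ+1)).ne'
  set F : ℝ → ℝ := fun t =>
    (1+t)^(κ+1) * ∑ ν ∈ Finset.range (κ+1),
      (dcoef κ ν : ℝ) / ((2*κ+1).factorial : ℝ) * (1-t)^(κ-ν) with hF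
  have key : ∀ z : ℝ, HasDerivAt F ((1 - z^2)^κ) z := by
    intro z
    have h1 : HasDerivAt (fun t : ℝ => (1+t)^(κ+1)) ((↑(κ+1) : ℝ) * (1+z)^κ) z := by
      have := ((hasDerivAt_id z).const_add 1).fun_pow (κ+1)
      simpa using this
    have hS : HasDerivAt
        (fun t : ℝ => ∑ ν ∈ Finset.range (κ+1),
          (dcoef κ ν : ℝ) / ((2*κ+1).factorial : ℝ) * (1-t)^(κ-ν))
        (∑ ν ∈ Finset.range (κ+1),
          (dcoef κ ν : ℝ) / ((2*κ+1).factorial : ℝ) *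
            ((↑(κ-ν) : ℝ) * (1-z)^(κ-ν-1) * (-1))) z := by
      apply HasDerivAt.fun_sum
      intro ν _
      exact (((hasDerivAt_id z).const_sub 1).fun_pow (κ-ν)).const_mul _
    have this2 := h1.fun_mul hS
    have e1 : ∀ (f : ℕ → ℝ), ∑ ν ∈ Finset.range (κ+1),
        (dcoef κ ν : ℝ) / ((2*κ+1).factorial : ℝ) * f ν
        = (∑ ν ∈ Finset.range (κ+1), (dcoef κ ν : ℝ) * f ν) / ((2*κ+1).factorial : ℝ) := by
      intro f
      rw [Finset.sum_div]
      exact Finset.sum_congr rfl fun ν _ => (div_mul_eq_mul_div _ _ _)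
    rw [e1 (fun ν => (1-z)^(κ-ν)), e1 (fun ν => (↑(κ-ν) : ℝ) * (1-z)^(κ-ν-1) * (-1))] at this2
    refine this2.congr_deriv (Eq.symm ?_)
    rw [← mul_div_assoc, ← mul_div_assoc, ← add_div, eq_div_iff hN]
    linear_combination -(sum_identity κ z)
  have hcont : Continuous fun z : ℝ => (1 - z^2)^κ := by fun_prop
  rw [intervalIntegral.integral_eq_sub_of_hasDerivAt
    (f := F) (fun z _ => key z) (hcont.intervalIntegrable _ _)]
  have hF0 : F (-1) = 0 := by
    simp [hF]
  rw [hF0, sub_zero]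
  simp only [hF]
  congr 1
  refine Finset.sum_congr rfl fun ν _ => ?_
  simp only [dcoef]
  push_cast
  ring
end

section
/- Let κ ≥ 1 be an integer and define g_ν = 2^ν C(κ,ν) (ν−1)!(2κ−ν)!/(2κ+1)! for 1 ≤ ν ≤ κ and g₀ = −1/(2κ+1). Then the function S(y) = g₀ ln((1−y)/2) + ∑_{ν=1}^{κ} g_ν (1−y)^{−ν} satisfies S'(y) = (1−y²)^{−κ−1} ∫_{−1}^{y} (1−z²)^κ dz for all y ∈ (−1,1). -/
open Finset

lemma telescope_aux (h : ℕ → ℝ) (n : ℕ) :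
    ∑ ν ∈ Icc 1 n, (h (ν-1) - h ν) = h 0 - h n := by
  induction n with
  | zero => simp
  | succ n ih =>
      rw [Finset.sum_Icc_succ_top (by omega), ih]
      simp only [Nat.add_sub_cancel]
      ring

theorem S_deriv (κ : ℕ) (hκ : 1 ≤ κ) (g : ℕ → ℝ)
    (hg0 : g 0 = -1 / (2 * (κ : ℝ) + 1))
    (hg : ∀ ν, 1 ≤ ν → ν ≤ κ →
      g ν = 2 ^ ν * (κ.choose ν : ℝ) * ((ν - 1).factorial : ℝ) * ((2 * κ - ν).factorial : ℝ) /
        ((2 * κ + 1).factorial : ℝ))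
    (y : ℝ) (hy : y ∈ Set.Ioo (-1 : ℝ) 1) :
    HasDerivAt
      (fun t : ℝ => g 0 * Real.log ((1 - t) / 2) + ∑ ν ∈ Finset.Icc 1 κ, g ν * (1 - t) ^ (-(ν : ℤ)))
      ((1 - y ^ 2) ^ (-(κ : ℤ) - 1) * ∫ z in (-1 : ℝ)..y, (1 - z ^ 2) ^ κ) y := by
  obtain ⟨hy1, hy2⟩ := hy
  have h1 : (0:ℝ) < 1 - y := by linarith
  have h2 : (0:ℝ) < 1 + y := by linarith
  have h1n : (1:ℝ) - y ≠ 0 := ne_of_gt h1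
  have h2n : (1:ℝ) + y ≠ 0 := ne_of_gt h2
  -- value of g 1
  have hg1 : g 1 = 1 / (2 * (κ:ℝ) + 1) := by
    obtain ⟨k, hk⟩ : ∃ k, κ = k + 1 := ⟨κ - 1, by omega⟩
    subst hk
    rw [hg 1 le_rfl (by omega)]
    have e2 : 2 * (k+1) - 1 = 2*k+1 := by omega
    have hfac : ((2*(k+1)+1).factorial : ℝ)
        = (2*(k:ℝ)+3)*(2*(k:ℝ)+2)*((2*k+1).factorial : ℝ) := by
      have e3 : 2 * (k+1) + 1 = (2*k+1) + 1 + 1 := by omega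
      rw [e3, Nat.factorial_succ, Nat.factorial_succ]
      push_cast; ring
    rw [e2, hfac, Nat.choose_one_right]
    have hf1 : ((2*k+1).factorial : ℝ) ≠ 0 := by positivity
    have hp2 : (2*(k:ℝ)+3) ≠ 0 := by positivity
    have hp3 : (2*(k:ℝ)+2) ≠ 0 := by positivity
    have h4 : 2 * ((k:ℝ)+1) + 1 = 2*(k:ℝ)+3 := by ring
    push_cast
    rw [h4]
    field_simp
    ring
  -- the recurrence
  have hrec : ∀ μ, 2 ≤ μ → μ ≤ κ →
      (μ : ℝ) * (2 * κ + 1 - μ) * g μ = 2 * ((μ:ℝ) - 1) * ((κ:ℝ) - μ + 1) * g (μ - 1) := by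
    intro μ h2' hμ
    obtain ⟨m, hm⟩ : ∃ m, μ = m + 2 := ⟨μ - 2, by omega⟩
    subst hm
    obtain ⟨j, hj⟩ : ∃ j, κ = m + 2 + j := ⟨κ - (m+2), by omega⟩
    subst hj
    have e0 : m + 2 - 1 = m + 1 := by omega
    rw [e0, hg (m+2) (by omega) (by omega), hg (m+1) (by omega) (by omega)]
    have e1 : m + 2 - 1 = m + 1 := by omega
    have e2 : 2 * (m + 2 + j) - (m + 2) = m + 2 + 2*j := by omega
    have e3 : m + 1 - 1 = m := by omega
    have e4 : 2 * (m + 2 + j) - (m + 1) = m + 3 + 2*j := by omega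
    rw [e1, e2, e3, e4]
    have hc : ((m+2+j).choose (m+2) : ℝ) * (m+2) = ((m+2+j).choose (m+1) : ℝ) * (j+1) := by
      have h0 := Nat.choose_succ_right_eq (m+2+j) (m+1)
      have h' : (m+2+j) - (m+1) = j + 1 := by omega
      rw [h'] at h0
      exact_mod_cast congrArg (Nat.cast (R := ℝ)) h0
    have hf1 : ((m+1).factorial : ℝ) = ((m:ℝ)+1) * m.factorial := by
      push_cast [Nat.factorial_succ]; ring
    have hf2 : ((m+3+2*j).factorial : ℝ) = ((m:ℝ)+3+2*j) * (m+2+2*j).factorial := by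
      have h5 : m+3+2*j = (m+2+2*j) + 1 := by omega
      rw [h5, Nat.factorial_succ]; push_cast; ring
    have hden : ((2*(m+2+j)+1).factorial : ℝ) ≠ 0 := by positivity
    field_simp
    rw [hf1, hf2]
    push_cast
    linear_combination
      (2^(m+2)*((m:ℝ)+3+2*j)*((m:ℝ)+1)*(m.factorial:ℝ)*((m+2+2*j).factorial:ℝ)) * hc
  -- the polynomial identity
  have hden : (2*(κ:ℝ)+1) ≠ 0 := by positivity
  have poly_id : ∀ u : ℝ,
      ((κ:ℝ)+1) * (-g 0 * u^κ + ∑ ν ∈ Icc 1 κ, (ν:ℝ) * g ν * u^(κ-ν))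
        + (2-u) * (g 0 * κ * u^(κ-1) - ∑ ν ∈ Icc 1 κ, (ν:ℝ) * ((κ-ν:ℕ):ℝ) * g ν * u^(κ-ν-1))
        = u^κ := by
    intro u
    set h : ℕ → ℝ := fun ν => if ν = 0 then 2*κ/(2*κ+1)*u^(κ-1)
      else 2*ν*((κ:ℝ)-ν)*g ν*u^(κ-ν-1) with hh
    have hterm : ∀ ν ∈ Icc 1 κ,
        ((κ:ℝ)+1)*((ν:ℝ)*g ν*u^(κ-ν)) - (2-u)*((ν:ℝ)*((κ-ν:ℕ):ℝ)*g ν*u^(κ-ν-1))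
          = h (ν-1) - h ν := by
      intro ν hν
      rw [mem_Icc] at hν
      obtain ⟨hν1, hν2⟩ := hν
      have c1 : ((κ-ν:ℕ):ℝ) = (κ:ℝ) - ν := by rw [Nat.cast_sub hν2]
      by_cases he : ν = 1
      · subst he
        simp only [hh, if_neg one_ne_zero, Nat.sub_self, if_pos rfl]
        rw [hg1, c1]
        by_cases hk1 : κ = 1
        · subst hk1; norm_num
        · have hk2 : 2 ≤ κ := by omega
          have e : u^(κ-1) = u^(κ-2)*u := by rw [← pow_succ]; congr 1; omega
          have e2 : κ - 1 - 1 = κ - 2 := by omega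
          rw [e, e2]
          push_cast
          field_simp
          ring
      · have hν2' : 2 ≤ ν := by omega
        have hne0 : ν ≠ 0 := by omega
        have hne0' : ν - 1 ≠ 0 := by omega
        simp only [hh, if_neg hne0, if_neg hne0']
        have c2 : ((ν-1:ℕ):ℝ) = (ν:ℝ) - 1 := by rw [Nat.cast_sub (by omega)]; norm_num
        rw [c1, c2]
        have hr := hrec ν hν2' hν2
        by_cases hvk : ν = κ
        · have hcast : (κ:ℝ) = (ν:ℝ) := by exact_mod_cast hvk.symm
          have e0 : κ - ν = 0 := by omega
          have e1 : κ - (ν-1) - 1 = 0 := by omega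
          have e3 : κ - ν - 1 = 0 := by omega
          rw [e3, e1, e0]
          rw [hcast] at hr ⊢
          linear_combination hr
        · have hlt : ν < κ := by omega
          have e : u^(κ-ν) = u^(κ-ν-1)*u := by rw [← pow_succ]; congr 1; omega
          have e2' : κ - (ν-1) - 1 = κ - ν := by omega
          rw [e2', e]
          linear_combination (u^(κ-ν-1)*u) * hr
    have step : ((κ:ℝ)+1) * (-g 0 * u^κ + ∑ ν ∈ Icc 1 κ, (ν:ℝ) * g ν * u^(κ-ν))
        + (2-u) * (g 0 * κ * u^(κ-1) - ∑ ν ∈ Icc 1 κ, (ν:ℝ) * ((κ-ν:ℕ):ℝ) * g ν * u^(κ-ν-1))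
        = ((κ:ℝ)+1) * (-g 0 * u^κ) + (2-u) * (g 0 * κ * u^(κ-1))
          + (((κ:ℝ)+1) * ∑ ν ∈ Icc 1 κ, (ν:ℝ) * g ν * u^(κ-ν)
             - (2-u) * ∑ ν ∈ Icc 1 κ, (ν:ℝ) * ((κ-ν:ℕ):ℝ) * g ν * u^(κ-ν-1)) := by ring
    rw [step, Finset.mul_sum, Finset.mul_sum, ← Finset.sum_sub_distrib,
      Finset.sum_congr rfl hterm, telescope_aux]
    have hκ0 : h κ = 0 := by
      simp only [hh, if_neg (by omega : κ ≠ 0)]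
      simp
    have h0 : h 0 = 2*κ/(2*κ+1)*u^(κ-1) := by simp [hh]
    rw [hκ0, h0, hg0]
    have e : u^κ = u^(κ-1)*u := by rw [← pow_succ]; congr 1; omega
    rw [e]
    field_simp
    ring
  -- F and its derivative
  set Q : ℝ → ℝ := fun z => -g 0 * (1-z)^κ + ∑ ν ∈ Icc 1 κ, (ν:ℝ) * g ν * (1-z)^(κ-ν)
    with hQdef
  have hF : ∀ z : ℝ, HasDerivAt (fun z => (1+z)^(κ+1) * Q z) ((1-z^2)^κ) z := by
    intro z
    have hbase : HasDerivAt (fun z : ℝ => 1 - z) (-1) z := (hasDerivAt_id z).const_sub 1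
    have hA : HasDerivAt (fun z : ℝ => (1+z)^(κ+1))
        (((κ:ℝ)+1)*(1+z)^κ) z := by
      have := ((hasDerivAt_id z).const_add 1).pow (κ+1)
      simp only [Nat.add_sub_cancel, mul_one, id_eq] at this
      refine this.congr_deriv (Eq.symm ?_)
      push_cast; ring
    have hQ : HasDerivAt Q
        (g 0 * κ * (1-z)^(κ-1)
          - ∑ ν ∈ Icc 1 κ, (ν:ℝ) * ((κ-ν:ℕ):ℝ) * g ν * (1-z)^(κ-ν-1)) z := by
      rw [hQdef]
      have hsum : HasDerivAt (fun z : ℝ => ∑ ν ∈ Icc 1 κ, (ν:ℝ) * g ν * (1-z)^(κ-ν))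
          (∑ ν ∈ Icc 1 κ, -((ν:ℝ) * ((κ-ν:ℕ):ℝ) * g ν * (1-z)^(κ-ν-1))) z := by
        apply HasDerivAt.fun_sum
        intro ν hν
        have h := HasDerivAt.const_mul ((ν:ℝ) * g ν) (hbase.pow (κ-ν))
        refine h.congr_deriv (Eq.symm ?_)
        ring
      have hfirst : HasDerivAt (fun z : ℝ => -g 0 * (1-z)^κ)
          (g 0 * κ * (1-z)^(κ-1)) z := by
        have h := HasDerivAt.const_mul (-g 0) (hbase.pow κ)
        refine h.congr_deriv (Eq.symm ?_)
        ring
      have := hfirst.add hsum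
      refine this.congr_deriv (Eq.symm ?_)
      rw [Finset.sum_neg_distrib]
      ring
    have := hA.mul hQ
    refine this.congr_deriv (Eq.symm ?_)
    have key := poly_id (1-z)
    rw [show (1:ℝ)-z^2 = (1-z)*(1+z) by ring, mul_pow]
    simp only [hQdef]
    linear_combination (-(1+z)^κ) * key
  -- evaluate the integral
  have hcont : Continuous (fun z : ℝ => (1-z^2)^κ) := by continuity
  have hint : (∫ z in (-1:ℝ)..y, (1-z^2)^κ) = (1+y)^(κ+1) * Q y := by
    rw [intervalIntegral.integral_eq_sub_of_hasDerivAt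
      (f := fun z => (1+z)^(κ+1) * Q z) (fun z _ => hF z)
      (hcont.intervalIntegrable _ _)]
    norm_num
  -- derivative of S
  have hS : HasDerivAt
      (fun t : ℝ => g 0 * Real.log ((1 - t) / 2)
        + ∑ ν ∈ Finset.Icc 1 κ, g ν * (1 - t) ^ (-(ν : ℤ)))
      (g 0 * ((-1/2) / ((1-y)/2))
        + ∑ ν ∈ Finset.Icc 1 κ, g ν * (((-(ν:ℤ)):ℝ) * (1-y)^(-(ν:ℤ)-1) * (-1))) y := by
    apply HasDerivAt.add
    · apply HasDerivAt.const_mul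
      have hin : HasDerivAt (fun t : ℝ => (1-t)/2) (-1/2) y :=
        ((hasDerivAt_id y).const_sub 1).div_const 2
      exact hin.log (by positivity)
    · apply HasDerivAt.fun_sum
      intro ν hν
      apply HasDerivAt.const_mul
      have h := (hasDerivAt_zpow (-(ν:ℤ)) (1-y) (Or.inl h1n)).comp y
        ((hasDerivAt_id y).const_sub 1)
      refine h.congr_deriv (Eq.symm ?_)
      push_cast
      ring
  rw [hint]
  convert hS using 1
  -- now the algebraic identity
  have hz1 : ((1:ℝ)-y^2)^(-(κ:ℤ)-1) = (1-y)^(-(κ:ℤ)-1) * (1+y)^(-(κ:ℤ)-1) := by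
    rw [show (1:ℝ)-y^2 = (1-y)*(1+y) by ring, mul_zpow]
  have hz2 : ((1:ℝ)+y)^(-(κ:ℤ)-1) * (1+y)^(κ+1:ℕ) = 1 := by
    rw [← zpow_natCast ((1:ℝ)+y) (κ+1), ← zpow_add₀ h2n]
    norm_num
  have hpκ : ((1:ℝ)-y)^(-(κ:ℤ)-1) * (1-y)^(κ:ℕ) = (1-y)⁻¹ := by
    rw [← zpow_natCast ((1:ℝ)-y) κ, ← zpow_add₀ h1n,
      show -(κ:ℤ)-1+κ = -1 by ring, zpow_neg_one]
  calc ((1:ℝ) - y ^ 2) ^ (-(κ : ℤ) - 1) * ((1+y)^(κ+1) * Q y)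
      = ((1-y)^(-(κ:ℤ)-1) * (((1+y)^(-(κ:ℤ)-1)) * (1+y)^(κ+1:ℕ))) * Q y := by
        rw [hz1]; ring
    _ = (1-y)^(-(κ:ℤ)-1) * Q y := by rw [hz2]; ring
    _ = (1-y)^(-(κ:ℤ)-1) * (-g 0 * (1-y)^κ)
        + ∑ ν ∈ Icc 1 κ, (1-y)^(-(κ:ℤ)-1) * ((ν:ℝ) * g ν * (1-y)^(κ-ν)) := by
        rw [hQdef, mul_add, Finset.mul_sum]
    _ = g 0 * ((-1/2) / ((1-y)/2))
        + ∑ ν ∈ Finset.Icc 1 κ, g ν * (((-(ν:ℤ)):ℝ) * (1-y)^(-(ν:ℤ)-1) * (-1)) := by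
        congr 1
        · have : (-1/2 : ℝ) / ((1-y)/2) = -(1-y)⁻¹ := by field_simp
          rw [this]
          linear_combination (-(g 0)) * hpκ
        · apply Finset.sum_congr rfl
          intro ν hν
          rw [mem_Icc] at hν
          have hp : ((1:ℝ)-y)^(-(κ:ℤ)-1) * (1-y)^(κ-ν:ℕ) = (1-y)^(-(ν:ℤ)-1) := by
            rw [← zpow_natCast ((1:ℝ)-y) (κ-ν), ← zpow_add₀ h1n]
            congr 1
            have : ((κ-ν:ℕ):ℤ) = (κ:ℤ) - ν := by omega
            rw [this]; ring
          push_cast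
          linear_combination ((ν:ℝ) * g ν) * hp
end

section
/- For every positive integer n and real λ > 0, the Gegenbauer polynomial C_n^λ satisfies ∫_{x}^{1} (1−y²)^{−λ−1/2} ∫_{y}^{1} (1−z²)^{λ−1/2} C_n^λ(z) dz dy = (C_n^λ(1) − C_n^λ(x)) / (n(n+2λ)) for all x ∈ (−1,1). -/
set_option maxHeartbeats 1000000


/-- The Gegenbauer (ultraspherical) polynomial `C_n^lam`, defined via the standard
three-term recurrence `(n+2) C_{n+2}(x) = 2 (n+1+lam) x C_{n+1}(x) - (n+2 lam) C_n(x)`,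
with `C_0 = 1` and `C_1(x) = 2 lam x`. -/
noncomputable def gegenbauer (lam : ℝ) : ℕ → ℝ → ℝ
  | 0, _ => 1
  | 1, x => 2 * lam * x
  | (n + 2), x =>
      (2 * ((n : ℝ) + 1 + lam) * x * gegenbauer lam (n + 1) x
        - ((n : ℝ) + 2 * lam) * gegenbauer lam n x) / ((n : ℝ) + 2)

noncomputable def gegenbauerD (lam : ℝ) : ℕ → ℝ → ℝ
  | 0, _ => 0
  | 1, _ => 2 * lam
  | (n + 2), x =>
      (2 * ((n : ℝ) + 1 + lam) * (gegenbauer lam (n + 1) x + x * gegenbauerD lam (n + 1) x)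
        - ((n : ℝ) + 2 * lam) * gegenbauerD lam n x) / ((n : ℝ) + 2)

lemma gegenbauer_succ_succ (lam : ℝ) (n : ℕ) (x : ℝ) :
    gegenbauer lam (n + 2) x =
      (2 * ((n : ℝ) + 1 + lam) * x * gegenbauer lam (n + 1) x
        - ((n : ℝ) + 2 * lam) * gegenbauer lam n x) / ((n : ℝ) + 2) := by
  rfl

lemma gegenbauerD_succ_succ (lam : ℝ) (n : ℕ) (x : ℝ) :
    gegenbauerD lam (n + 2) x =
      (2 * ((n : ℝ) + 1 + lam) * (gegenbauer lam (n + 1) x + x * gegenbauerD lam (n + 1) x)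
        - ((n : ℝ) + 2 * lam) * gegenbauerD lam n x) / ((n : ℝ) + 2) := by
  rfl

lemma gegenbauer_pair (lam : ℝ) (n : ℕ) :
    (∀ x, HasDerivAt (gegenbauer lam n) (gegenbauerD lam n x) x) ∧
      (∀ x, HasDerivAt (gegenbauer lam (n + 1)) (gegenbauerD lam (n + 1) x) x) := by
  induction n with
  | zero =>
    constructor
    · intro x; simpa [gegenbauer, gegenbauerD] using hasDerivAt_const x (1 : ℝ)
    · intro x
      have h : HasDerivAt (fun x : ℝ => 2 * lam * x) (2 * lam) x := by
        simpa using (hasDerivAt_id x).const_mul (2 * lam)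
      simpa [gegenbauer, gegenbauerD] using h
  | succ k ih =>
    refine ⟨ih.2, fun x => ?_⟩
    have h1 := ih.1 x
    have h2 := ih.2 x
    have H := ((((hasDerivAt_id x).mul h2).const_mul (2 * ((k : ℝ) + 1 + lam))).sub
      (h1.const_mul ((k : ℝ) + 2 * lam))).div_const ((k : ℝ) + 2)
    have hfun : gegenbauer lam (k + 1 + 1) = fun z =>
        (2 * ((k : ℝ) + 1 + lam) * (id z * gegenbauer lam (k + 1) z)
          - ((k : ℝ) + 2 * lam) * gegenbauer lam k z) / ((k : ℝ) + 2) := by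
      funext z
      show gegenbauer lam (k + 2) z = _
      rw [gegenbauer_succ_succ]
      simp only [id_eq]
      ring
    have hd : gegenbauerD lam (k + 1 + 1) x =
        (2 * ((k : ℝ) + 1 + lam) * (1 * gegenbauer lam (k + 1) x + id x * gegenbauerD lam (k + 1) x)
          - ((k : ℝ) + 2 * lam) * gegenbauerD lam k x) / ((k : ℝ) + 2) := by
      show gegenbauerD lam (k + 2) x = _
      rw [gegenbauerD_succ_succ]
      simp only [id_eq]
      ring
    rw [hfun, hd]
    exact H

lemma gegenbauer_hasDerivAt (lam : ℝ) (n : ℕ) (x : ℝ) :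
    HasDerivAt (gegenbauer lam n) (gegenbauerD lam n x) x :=
  (gegenbauer_pair lam n).1 x

lemma gegenbauer_continuous (lam : ℝ) (n : ℕ) : Continuous (gegenbauer lam n) :=
  (Differentiable.continuous fun x => (gegenbauer_hasDerivAt lam n x).differentiableAt)

lemma gegenbauerD_continuous (lam : ℝ) (n : ℕ) : Continuous (gegenbauerD lam n) := by
  induction n using Nat.strong_induction_on with
  | _ n ih =>
    match n with
    | 0 => simpa [gegenbauerD] using continuous_const
    | 1 => simpa [gegenbauerD] using (continuous_const : Continuous fun _ : ℝ => 2 * lam)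
    | (k + 2) =>
      have e : gegenbauerD lam (k + 2) = fun x =>
          (2 * ((k : ℝ) + 1 + lam) * (gegenbauer lam (k + 1) x + x * gegenbauerD lam (k + 1) x)
            - ((k : ℝ) + 2 * lam) * gegenbauerD lam k x) / ((k : ℝ) + 2) :=
        funext fun x => gegenbauerD_succ_succ lam k x
      rw [e]
      exact ((continuous_const.mul ((gegenbauer_continuous lam (k + 1)).add
        (continuous_id.mul (ih (k + 1) (by omega))))).sub
        (continuous_const.mul (ih k (by omega)))).div_const _

lemma gegenbauer_SL (lam : ℝ) (m : ℕ) : ∀ x : ℝ,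
    (1 - x ^ 2) * gegenbauerD lam (m + 1) x =
      ((m : ℝ) + 2 * lam) * gegenbauer lam m x
        - ((m : ℝ) + 1) * x * gegenbauer lam (m + 1) x := by
  induction m using Nat.strong_induction_on with
  | _ m ih =>
    match m with
    | 0 =>
      intro x
      simp [gegenbauer, gegenbauerD]
      ring
    | 1 =>
      intro x
      have e : gegenbauerD lam (1 + 1) x = gegenbauerD lam (0 + 2) x := rfl
      have e2 : gegenbauer lam (1 + 1) x = gegenbauer lam (0 + 2) x := rfl
      rw [e, e2, gegenbauerD_succ_succ, gegenbauer_succ_succ]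
      simp [gegenbauer, gegenbauerD]
      ring
    | (k + 2) =>
      intro x
      have h1 := ih k (by omega) x
      have h2 := ih (k + 1) (by omega) x
      rw [show gegenbauer lam (k + 1 + 1) = gegenbauer lam (k + 2) from rfl,
        show gegenbauerD lam (k + 1 + 1) = gegenbauerD lam (k + 2) from rfl] at h2
      have hk2 : ((k : ℝ) + 2) ≠ 0 := by positivity
      have hk3 : ((k : ℝ) + 3) ≠ 0 := by positivity
      have hc2 : ((k : ℝ) + 2) * gegenbauer lam (k + 2) x =
          2 * ((k : ℝ) + 1 + lam) * x * gegenbauer lam (k + 1) x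
            - ((k : ℝ) + 2 * lam) * gegenbauer lam k x := by
        rw [gegenbauer_succ_succ]; field_simp
      have hc3 : ((k : ℝ) + 3) * gegenbauer lam (k + 2 + 1) x =
          2 * ((k : ℝ) + 2 + lam) * x * gegenbauer lam (k + 2) x
            - ((k : ℝ) + 1 + 2 * lam) * gegenbauer lam (k + 1) x := by
        rw [show gegenbauer lam (k + 2 + 1) = gegenbauer lam (k + 1 + 2) from rfl,
          gegenbauer_succ_succ,
          show gegenbauer lam (k + 1 + 1) = gegenbauer lam (k + 2) from rfl]
        push_cast
        field_simp
        ring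
      have hg3 : ((k : ℝ) + 3) * gegenbauerD lam (k + 2 + 1) x =
          2 * ((k : ℝ) + 2 + lam) *
              (gegenbauer lam (k + 2) x + x * gegenbauerD lam (k + 2) x)
            - ((k : ℝ) + 1 + 2 * lam) * gegenbauerD lam (k + 1) x := by
        rw [show gegenbauerD lam (k + 2 + 1) = gegenbauerD lam (k + 1 + 2) from rfl,
          gegenbauerD_succ_succ,
          show gegenbauer lam (k + 1 + 1) = gegenbauer lam (k + 2) from rfl,
          show gegenbauerD lam (k + 1 + 1) = gegenbauerD lam (k + 2) from rfl]
        push_cast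
        field_simp
        ring
      refine mul_left_cancel₀ hk3 ?_
      linear_combination (norm := (push_cast; ring_nf))
        (1 - x ^ 2) * hg3 + ((k : ℝ) + 3) * x * hc3
          - ((k : ℝ) + 1 + 2 * lam) * hc2 + 2 * ((k : ℝ) + 2 + lam) * x * h2
          - ((k : ℝ) + 1 + 2 * lam) * h1

lemma gegenbauer_E (lam : ℝ) (m : ℕ) (x : ℝ) :
    -(2 * lam - 1) * x *
        (((m : ℝ) + 2 * lam) * gegenbauer lam m x
          - ((m : ℝ) + 1) * x * gegenbauer lam (m + 1) x)
      + (1 - x ^ 2) *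
        (((m : ℝ) + 2 * lam) * gegenbauerD lam m x
          - ((m : ℝ) + 1) * gegenbauer lam (m + 1) x
          - ((m : ℝ) + 1) * x * gegenbauerD lam (m + 1) x)
      = -(((m : ℝ) + 1) * ((m : ℝ) + 1 + 2 * lam)) * (1 - x ^ 2) *
          gegenbauer lam (m + 1) x := by
  match m with
  | 0 =>
    simp [gegenbauer, gegenbauerD]
    ring
  | (k + 1) =>
    have h1 := gegenbauer_SL lam k x
    have h2 := gegenbauer_SL lam (k + 1) x
    rw [show gegenbauer lam (k + 1 + 1) = gegenbauer lam (k + 2) from rfl,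
      show gegenbauerD lam (k + 1 + 1) = gegenbauerD lam (k + 2) from rfl] at h2
    have hce : ((k : ℝ) + 2) * gegenbauer lam (k + 2) x =
        2 * ((k : ℝ) + 1 + lam) * x * gegenbauer lam (k + 1) x
          - ((k : ℝ) + 2 * lam) * gegenbauer lam k x := by
      rw [gegenbauer_succ_succ]
      field_simp
    rw [show gegenbauer lam (k + 1 + 1) = gegenbauer lam (k + 2) from rfl,
      show gegenbauerD lam (k + 1 + 1) = gegenbauerD lam (k + 2) from rfl]
    linear_combination (norm := (push_cast; ring_nf))
      ((k : ℝ) + 1 + 2 * lam) * h1 - ((k : ℝ) + 2) * x * h2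
        + ((k : ℝ) + 1 + 2 * lam) * hce

lemma gegenbauer_inner_integral (lam : ℝ) (hlam : 0 < lam) (m : ℕ) (y : ℝ)
    (hy : y ∈ Set.Ioo (-1 : ℝ) 1) :
    (∫ z in y..1, (1 - z ^ 2) ^ (lam - 1 / 2) * gegenbauer lam (m + 1) z) =
      (1 - y ^ 2) ^ (lam + 1 / 2) * gegenbauerD lam (m + 1) y /
        (((m : ℝ) + 1) * ((m : ℝ) + 1 + 2 * lam)) := by
  obtain ⟨hy1, hy2⟩ := hy
  set K : ℝ := ((m : ℝ) + 1) * ((m : ℝ) + 1 + 2 * lam) with hK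
  have hKpos : 0 < K := by positivity
  set f : ℝ → ℝ := fun z => -((1 - z ^ 2) ^ (lam + 1 / 2) * gegenbauerD lam (m + 1) z) / K
    with hf
  set fG : ℝ → ℝ := fun z => -((1 - z ^ 2) ^ (lam - 1 / 2) *
      (((m : ℝ) + 2 * lam) * gegenbauer lam m z
        - ((m : ℝ) + 1) * z * gegenbauer lam (m + 1) z)) / K with hfG
  -- f and fG agree on [-1, 1]
  have hagree : ∀ z ∈ Set.Icc (-1 : ℝ) 1, f z = fG z := by
    intro z hz
    have hz2 : 0 ≤ 1 - z ^ 2 := by nlinarith [hz.1, hz.2]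
    have hSL := gegenbauer_SL lam m z
    rcases eq_or_lt_of_le hz2 with h0 | hpos
    · have hz0 : (1 - z ^ 2 : ℝ) = 0 := h0.symm
      have hG0 : ((m : ℝ) + 2 * lam) * gegenbauer lam m z
          - ((m : ℝ) + 1) * z * gegenbauer lam (m + 1) z = 0 := by
        rw [← hSL, hz0, zero_mul]
      simp only [hf, hfG, hz0, hG0, mul_zero, zero_mul, neg_zero, zero_div]
      rw [Real.zero_rpow (by positivity : lam + 1 / 2 ≠ 0)]
      simp
    · have hr : (1 - z ^ 2 : ℝ) ^ (lam + 1 / 2) =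
          (1 - z ^ 2) ^ (lam - 1 / 2) * (1 - z ^ 2) := by
        rw [show lam + 1 / 2 = (lam - 1 / 2) + 1 by ring, Real.rpow_add hpos,
          Real.rpow_one]
      simp only [hf, hfG, hr, ← hSL]
      ring
  -- continuity of f
  have hcf : Continuous f := by
    have h1 : Continuous fun z : ℝ => (1 - z ^ 2) ^ (lam + 1 / 2) := by
      rw [continuous_iff_continuousAt]
      intro z
      exact (Real.continuousAt_rpow_const _ _ (Or.inr (by positivity))).comp
        (by fun_prop)
    exact ((h1.mul (gegenbauerD_continuous lam (m + 1))).neg).div_const K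
  -- derivative of f on the interior
  have hderiv : ∀ z ∈ Set.Ioo y 1,
      HasDerivAt f ((1 - z ^ 2) ^ (lam - 1 / 2) * gegenbauer lam (m + 1) z) z := by
    intro z hz
    have hz1 : -1 < z := lt_trans hy1 hz.1
    have hpos : 0 < 1 - z ^ 2 := by nlinarith [hz.2]
    have hbase : HasDerivAt (fun w : ℝ => 1 - w ^ 2) (-(2 * z)) z := by
      simpa using (hasDerivAt_pow 2 z).const_sub 1
    have hrpow : HasDerivAt (fun w : ℝ => (1 - w ^ 2) ^ (lam - 1 / 2))
        (-(2 * z) * (lam - 1 / 2) * (1 - z ^ 2) ^ (lam - 1 / 2 - 1)) z :=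
      hbase.rpow_const (Or.inl (ne_of_gt hpos))
    have hG : HasDerivAt (fun w : ℝ => ((m : ℝ) + 2 * lam) * gegenbauer lam m w
        - ((m : ℝ) + 1) * w * gegenbauer lam (m + 1) w)
        (((m : ℝ) + 2 * lam) * gegenbauerD lam m z
          - (((m : ℝ) + 1) * gegenbauer lam (m + 1) z
            + ((m : ℝ) + 1) * z * gegenbauerD lam (m + 1) z)) z := by
      have h2 : HasDerivAt (fun w : ℝ => ((m : ℝ) + 1) * w * gegenbauer lam (m + 1) w)
          (((m : ℝ) + 1) * gegenbauer lam (m + 1) z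
            + ((m : ℝ) + 1) * z * gegenbauerD lam (m + 1) z) z := by
        have := (((hasDerivAt_id z).const_mul ((m : ℝ) + 1)).mul
          (gegenbauer_hasDerivAt lam (m + 1) z))
        exact this.congr_deriv (by simp only [id_eq, mul_one])
      exact ((gegenbauer_hasDerivAt lam m z).const_mul _).sub h2
    have hfG' : HasDerivAt fG
        (-((-(2 * z) * (lam - 1 / 2) * (1 - z ^ 2) ^ (lam - 1 / 2 - 1)) *
            (((m : ℝ) + 2 * lam) * gegenbauer lam m z
              - ((m : ℝ) + 1) * z * gegenbauer lam (m + 1) z)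
          + (1 - z ^ 2) ^ (lam - 1 / 2) *
            (((m : ℝ) + 2 * lam) * gegenbauerD lam m z
              - (((m : ℝ) + 1) * gegenbauer lam (m + 1) z
                + ((m : ℝ) + 1) * z * gegenbauerD lam (m + 1) z))) / K) z :=
      ((hrpow.mul hG).neg).div_const K
    have heq : f =ᶠ[nhds z] fG := by
      filter_upwards [Ioo_mem_nhds hz1 hz.2] with w hw
      exact hagree w ⟨hw.1.le, hw.2.le⟩
    have hfe := hfG'.congr_of_eventuallyEq heq
    refine HasDerivAt.congr_deriv hfe (Eq.symm ?_)
    have hsplit : (1 - z ^ 2 : ℝ) ^ (lam - 1 / 2) =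
        (1 - z ^ 2) ^ (lam - 1 / 2 - 1) * (1 - z ^ 2) := by
      have h := (Real.rpow_add hpos (lam - 1 / 2 - 1) 1).symm
      rw [Real.rpow_one] at h
      rw [show lam - 1 / 2 - 1 + 1 = lam - 1 / 2 by ring] at h
      exact h.symm
    have hE := gegenbauer_E lam m z
    rw [eq_div_iff (ne_of_gt hKpos), hK, hsplit]
    linear_combination ((1 - z ^ 2) ^ (lam - 1 / 2 - 1)) * hE
  -- integrability of the integrand
  have hint : IntervalIntegrable
      (fun z => (1 - z ^ 2) ^ (lam - 1 / 2) * gegenbauer lam (m + 1) z) MeasureTheory.volume y 1 := by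
    have hbase : IntervalIntegrable (fun u : ℝ => u ^ (lam - 1 / 2)) MeasureTheory.volume 0 (1 - y) :=
      intervalIntegral.intervalIntegrable_rpow' (by linarith)
    have hcomp : IntervalIntegrable (fun z : ℝ => (1 - z) ^ (lam - 1 / 2)) MeasureTheory.volume y 1 := by
      simpa using (hbase.comp_sub_left 1).symm
    have hφ : ContinuousOn
        (fun z : ℝ => (1 + z) ^ (lam - 1 / 2) * |gegenbauer lam (m + 1) z|)
        (Set.Icc y 1) := by
      refine ContinuousOn.mul ?_ (gegenbauer_continuous lam (m + 1)).abs.continuousOn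
      intro z hz
      have h1z : (1 + z : ℝ) ≠ 0 := by have := hz.1; intro h; nlinarith
      exact (ContinuousAt.rpow_const (by fun_prop) (Or.inl h1z)).continuousWithinAt
    obtain ⟨M, hM⟩ := (isCompact_Icc : IsCompact (Set.Icc y 1)).exists_bound_of_continuousOn hφ
    have hM0 : (0 : ℝ) ≤ M := le_trans (norm_nonneg _) (hM y ⟨le_refl y, hy2.le⟩)
    refine (hcomp.const_mul M).mono_fun ?_ ?_
    · exact (((by fun_prop : Measurable fun z : ℝ => (1 - z ^ 2) ^ (lam - 1 / 2)).mul
        (gegenbauer_continuous lam (m + 1)).measurable)).aestronglyMeasurable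
    · rw [Set.uIoc_of_le hy2.le]
      refine (MeasureTheory.ae_restrict_mem measurableSet_Ioc).mono fun z hz => ?_
      have h1z : (0 : ℝ) ≤ 1 - z := by linarith [hz.2]
      have h2z : (0 : ℝ) < 1 + z := by linarith [hz.1]
      have hzIcc : z ∈ Set.Icc y 1 := ⟨hz.1.le, hz.2⟩
      have hsplit : ((1 : ℝ) - z ^ 2) ^ (lam - 1 / 2) =
          (1 - z) ^ (lam - 1 / 2) * (1 + z) ^ (lam - 1 / 2) := by
        rw [show (1 : ℝ) - z ^ 2 = (1 - z) * (1 + z) by ring,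
          Real.mul_rpow h1z h2z.le]
      have hb := hM z hzIcc
      rw [Real.norm_eq_abs] at hb
      simp only [Real.norm_eq_abs]
      have habs : |(1 - z ^ 2) ^ (lam - 1 / 2) * gegenbauer lam (m + 1) z| =
          (1 - z) ^ (lam - 1 / 2) *
            ((1 + z) ^ (lam - 1 / 2) * |gegenbauer lam (m + 1) z|) := by
        rw [abs_mul, hsplit, abs_of_nonneg (mul_nonneg (Real.rpow_nonneg h1z _)
          (Real.rpow_nonneg h2z.le _))]
        ring
      rw [habs]
      calc (1 - z) ^ (lam - 1 / 2) *
            ((1 + z) ^ (lam - 1 / 2) * |gegenbauer lam (m + 1) z|)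
          ≤ (1 - z) ^ (lam - 1 / 2) * M := by
            refine mul_le_mul_of_nonneg_left ?_ (Real.rpow_nonneg h1z _)
            exact le_trans (le_abs_self _) hb
        _ ≤ |M * (1 - z) ^ (lam - 1 / 2)| := by
            rw [mul_comm]; exact le_abs_self _
  -- FTC
  have hFTC := intervalIntegral.integral_eq_sub_of_hasDeriv_right_of_le hy2.le
    hcf.continuousOn
    (fun z hz => (hderiv z hz).hasDerivWithinAt) hint
  have h10 : f 1 = 0 := by
    simp only [hf]
    norm_num
    exact Or.inl (Or.inl (Real.zero_rpow (by positivity)))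
  rw [hFTC, h10]
  simp only [hf]
  ring

theorem iterated_integral_gegenbauer_right (lam : ℝ) (hlam : 0 < lam) (n : ℕ) (hn : 1 ≤ n)
    (x : ℝ) (hx : x ∈ Set.Ioo (-1 : ℝ) 1) :
    (∫ y in x..1, (1 - y ^ 2) ^ (-lam - 1 / 2) *
        ∫ z in y..1, (1 - z ^ 2) ^ (lam - 1 / 2) * gegenbauer lam n z) =
      (gegenbauer lam n 1 - gegenbauer lam n x) / ((n : ℝ) * ((n : ℝ) + 2 * lam)) := by
  obtain ⟨m, rfl⟩ : ∃ m, n = m + 1 := ⟨n - 1, (Nat.succ_pred_eq_of_pos hn).symm⟩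
  obtain ⟨hx1, hx2⟩ := hx
  set K : ℝ := ((m : ℝ) + 1) * ((m : ℝ) + 1 + 2 * lam) with hK
  have hKpos : 0 < K := by positivity
  have hne : ∀ᵐ t : ℝ, t ≠ 1 := by
    refine MeasureTheory.ae_iff.mpr ?_
    have : {a : ℝ | ¬a ≠ 1} = {1} := by ext t; simp
    rw [this]
    exact Real.volume_singleton
  have hcong : ∫ y in x..1, (1 - y ^ 2) ^ (-lam - 1 / 2) *
        ∫ z in y..1, (1 - z ^ 2) ^ (lam - 1 / 2) * gegenbauer lam (m + 1) z
      = ∫ y in x..1, gegenbauerD lam (m + 1) y / K := by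
    refine intervalIntegral.integral_congr_ae ?_
    filter_upwards [hne] with t ht hmem
    rw [Set.uIoc_of_le hx2.le] at hmem
    have ht1 : t < 1 := lt_of_le_of_ne hmem.2 ht
    have htIoo : t ∈ Set.Ioo (-1 : ℝ) 1 := ⟨lt_trans hx1 hmem.1, ht1⟩
    rw [gegenbauer_inner_integral lam hlam m t htIoo]
    have hpos : 0 < 1 - t ^ 2 := by nlinarith [htIoo.1, htIoo.2]
    have hone : (1 - t ^ 2) ^ (-lam - 1 / 2) * (1 - t ^ 2) ^ (lam + 1 / 2) = 1 := by
      rw [← Real.rpow_add hpos]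
      norm_num
    calc (1 - t ^ 2) ^ (-lam - 1 / 2) *
          ((1 - t ^ 2) ^ (lam + 1 / 2) * gegenbauerD lam (m + 1) t / K)
        = ((1 - t ^ 2) ^ (-lam - 1 / 2) * (1 - t ^ 2) ^ (lam + 1 / 2)) *
            gegenbauerD lam (m + 1) t / K := by ring
      _ = gegenbauerD lam (m + 1) t / K := by rw [hone, one_mul]
  rw [hcong, intervalIntegral.integral_div]
  rw [intervalIntegral.integral_eq_sub_of_hasDerivAt
    (fun t _ => gegenbauer_hasDerivAt lam (m + 1) t)
    ((gegenbauerD_continuous lam (m + 1)).intervalIntegrable x 1)]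
  rw [hK]
  push_cast
  ring
end
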